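/- arXiv:1504.06998 — 2 statements merged into one kernel-verified Lean document; each statement's English description precedes it below -/
import Mathlib

section
/- Monotonicity of modular global sensitivity: with the setup of the stretched function, if w′ ≤ w coordinatewise with w′, w ∈ [0,1]ⁿ, then for every coordinate i, the modular global sensitivity satisfies Sᵢ(R, w′) ≤ Sᵢ(R, w). -/
/-- Two profiles are neighbors on coordinate `i`: they agree on all other coordinates. -/
def NeighborAt {n : ℕ} (i : Fin n) (d d' : Fin n → ℝ) : Prop :=
  ∀ j, j ≠ i → d j = d' j

/-- Componentwise stretching of a vector by `w` (i.e. `diag(w)·x`). -/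
def stretch {n : ℕ} (w : Fin n → ℝ) (x : Fin n → ℝ) : Fin n → ℝ :=
  fun i => w i * x i

def SemiBalanced {n : ℕ} (D : Set (Fin n → ℝ)) : Prop :=
  ∀ w : Fin n → ℝ, (∀ i, w i ∈ Set.Icc (0:ℝ) 1) → ∀ x ∈ D, stretch w x ∈ D

/-- Modular global sensitivity of `f` in coordinate `i` over domain `E`. -/
noncomputable def modSens {n : ℕ} (f : (Fin n → ℝ) → ℝ) (E : Set (Fin n → ℝ)) (i : Fin n) : ℝ :=
  sSup {r | ∃ d ∈ E, ∃ d' ∈ E, NeighborAt i d d' ∧ r = |f d - f d'|}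

theorem modSens_stretch_mono {n : ℕ} (f : (Fin n → ℝ) → ℝ) (D : Set (Fin n → ℝ))
    (hD : SemiBalanced D) (w w' : Fin n → ℝ)
    (hw : ∀ i, w i ∈ Set.Icc (0:ℝ) 1) (hw' : ∀ i, w' i ∈ Set.Icc (0:ℝ) 1)
    (hle : ∀ i, w' i ≤ w i)
    (hbdd : ∀ i, BddAbove {r | ∃ d ∈ stretch w '' D, ∃ d' ∈ stretch w '' D, NeighborAt i d d' ∧ r = |f d - f d'|}) :
    ∀ i, modSens f (stretch w' '' D) i ≤ modSens f (stretch w '' D) i := by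
  intro i
  set u : Fin n → ℝ := fun j => if w j = 0 then 0 else w' j / w j with hu
  have hu01 : ∀ j, u j ∈ Set.Icc (0:ℝ) 1 := by
    intro j
    by_cases h : w j = 0
    · simp [hu, h]
    · have hpos : 0 < w j := lt_of_le_of_ne (hw j).1 (Ne.symm h)
      simp only [hu, h, if_false]
      constructor
      · exact div_nonneg (hw' j).1 hpos.le
      · exact div_le_one_of_le₀ (hle j) hpos.le
  have hcomp : ∀ x, stretch w' x = stretch w (stretch u x) := by
    intro x
    funext j
    simp only [stretch, hu]
    by_cases h : w j = 0
    · have : w' j = 0 := le_antisymm (h ▸ hle j) (hw' j).1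
      simp [h, this]
    · rw [if_neg h]
      field_simp
  have hsub : stretch w' '' D ⊆ stretch w '' D := by
    rintro _ ⟨x, hx, rfl⟩
    exact ⟨stretch u x, hD u hu01 x hx, (hcomp x).symm⟩
  by_cases hDne : D.Nonempty
  · obtain ⟨x0, hx0⟩ := hDne
    apply csSup_le_csSup (hbdd i)
    · exact ⟨0, stretch w' x0, ⟨x0, hx0, rfl⟩, stretch w' x0, ⟨x0, hx0, rfl⟩,
        fun j _ => rfl, by simp⟩
    · rintro r ⟨d, hd, d', hd', hnb, rfl⟩
      exact ⟨d, hsub hd, d', hsub hd', hnb, rfl⟩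
  · rw [Set.not_nonempty_iff_eq_empty] at hDne
    simp [modSens, hDne]
end

section
/- Protection of the privacy vector: let f : D → ℝ with finite global sensitivity S(f) > 0, and for each privacy vector v ∈ [0,1]ⁿ let T(v) = diag(w(v)) be a shrinkage matrix where the i-th diagonal entry wᵢ depends only on vᵢ. Let f̂(d, v) = f(T(v)·d) + N with N Laplace with scale S(f)/ε. Then for any fixed profile d ∈ D (with D semi-balanced) and any two privacy vectors v ∼ v⁽ⁱ⁾ differing only in coordinate i, the output densities satisfy p_{f̂(d,v)}(t) ≤ exp(ε)·p_{f̂(d,v⁽ⁱ⁾)}(t) for all t ∈ ℝ. -/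
def Neighbor {n : ℕ} (d d' : Fin n → ℝ) : Prop :=
  ∃ i, NeighborAt i d d'

noncomputable def globSens {n : ℕ} (f : (Fin n → ℝ) → ℝ) (D : Set (Fin n → ℝ)) : ℝ :=
  sSup {r | ∃ d ∈ D, ∃ d' ∈ D, Neighbor d d' ∧ r = |f d - f d'|}

noncomputable def lapDensity (σ x : ℝ) : ℝ :=
  (1 / (2 * σ)) * Real.exp (-|x| / σ)

/-- Protection of the privacy vector: the stretching mechanism provides
`ε`-differential privacy with respect to each privacy weight. Here `w : ℝ → ℝ` maps a
privacy weight to a shrinkage factor, so the `i`-th diagonal entry of `T(v)` is `w (v i)`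
and depends only on `v i`. -/
theorem privacy_vector_protection {n : ℕ} (f : (Fin n → ℝ) → ℝ) (D : Set (Fin n → ℝ))
    (hD : SemiBalanced D) (ε : ℝ) (hε : 0 < ε)
    (hSf : 0 < globSens f D)
    (hbdd : BddAbove {r | ∃ d ∈ D, ∃ d' ∈ D, Neighbor d d' ∧ r = |f d - f d'|})
    (w : ℝ → ℝ) (hw : ∀ s, s ∈ Set.Icc (0:ℝ) 1 → w s ∈ Set.Icc (0:ℝ) 1) :
    ∀ d ∈ D, ∀ i : Fin n, ∀ v v' : Fin n → ℝ,
      (∀ j, v j ∈ Set.Icc (0:ℝ) 1) → (∀ j, v' j ∈ Set.Icc (0:ℝ) 1) →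
      NeighborAt i v v' → ∀ t : ℝ,
      lapDensity (globSens f D / ε) (t - f (stretch (fun j => w (v j)) d))
        ≤ Real.exp ε * lapDensity (globSens f D / ε) (t - f (stretch (fun j => w (v' j)) d)) := by
  intro d hd i v v' hv hv' hnb t
  set S := globSens f D with hS
  have hσpos : 0 < S / ε := div_pos hSf hε
  have h1 : stretch (fun j => w (v j)) d ∈ D := hD _ (fun j => hw _ (hv j)) d hd
  have h2 : stretch (fun j => w (v' j)) d ∈ D := hD _ (fun j => hw _ (hv' j)) d hd
  set a := f (stretch (fun j => w (v j)) d) with ha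
  set b := f (stretch (fun j => w (v' j)) d) with hb
  have hle : |a - b| ≤ S := by
    apply le_csSup hbdd
    exact ⟨_, h1, _, h2, ⟨i, fun j hj => by simp [stretch, hnb j hj]⟩, rfl⟩
  unfold lapDensity
  rw [show Real.exp ε * (1 / (2 * (S / ε)) * Real.exp (-|t - b| / (S / ε)))
      = (1 / (2 * (S / ε))) * Real.exp (ε + -|t - b| / (S / ε)) by
    rw [Real.exp_add]; ring]
  apply mul_le_mul_of_nonneg_left _ (by positivity)
  apply Real.exp_le_exp.mpr
  have key : |t - b| - |t - a| ≤ S := by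
    have h1 := abs_sub_abs_le_abs_sub (t - b) (t - a)
    have h2 : |t - b - (t - a)| = |a - b| := by rw [show t - b - (t - a) = a - b by ring]
    linarith
  rw [div_le_iff₀ hσpos]
  have heq : (ε + -|t - b| / (S / ε)) * (S / ε) = S - |t - b| := by
    field_simp; ring
  rw [heq]
  linarith
end
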